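/- Let Y₀, Y₁ be discrete random variables with given marginal pmfs on finite supports and fix δ. With L_i = max{P(Y₁=i) + P(Y₀=i−δ) − 1, 0} and U_i = min{P(Y₁=i), P(Y₀=i−δ)}, there exist couplings of the marginals attaining P(Y₁ − Y₀ = δ) = Σᵢ Lᵢ and P(Y₁ − Y₀ = δ) = Σᵢ Uᵢ; i.e., the bounds Σᵢ Lᵢ ≤ P(Y₁ − Y₀ = δ) ≤ Σᵢ Uᵢ are sharp. -/

import Mathlib

namespace Stmt14Aux

/-- overlap length of `[a,b)` and `[c,d)` -/
noncomputable def ov (a b c d : ℝ) : ℝ := max 0 (min b d - max a c)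

lemma ov_nonneg (a b c d : ℝ) : 0 ≤ ov a b c d := le_max_left _ _

lemma ov_eq_zero (a b c d : ℝ) (h : min b d ≤ max a c) : ov a b c d = 0 :=
  max_eq_left (by linarith)

lemma ov_clamp (a b c d : ℝ) (hab : a ≤ b) (hcd : c ≤ d) :
    ov a b c d = max a (min b d) - max a (min b c) := by
  unfold ov
  rcases le_total b d with h1 | h1 <;> rcases le_total a c with h2 | h2 <;>
    rcases le_total b c with h3 | h3 <;> rcases le_total a d with h4 | h4 <;>
    simp [min_def, max_def] <;> split_ifs <;> linarith

lemma ov_comm (a b c d : ℝ) : ov a b c d = ov c d a b := by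
  unfold ov; rw [min_comm b d, max_comm a c]

lemma ov_shift (a b c d : ℝ) : ov a b (c - 1) (d - 1) = ov (a + 1) (b + 1) c d := by
  unfold ov; simp only [min_def, max_def]; split_ifs <;> linarith

/-- telescoping sum over a `Finset.Ico` in ℤ -/
lemma sum_tele (h : ℤ → ℝ) (A : ℤ) :
    ∀ B, A ≤ B → ∑ k ∈ Finset.Ico A B, (h (k + 1) - h k) = h B - h A := by
  refine Int.le_induction ?_ ?_
  · simp
  · intro B hAB ih
    have e : Finset.Ico A (B + 1) = insert B (Finset.Ico A B) := by
      rw [Finset.Ico_insert_right hAB]; rfl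
    rw [e, Finset.sum_insert (by simp), ih]; ring

/-- telescoping tsum over ℤ -/
lemma tsum_tele (h : ℤ → ℝ) (A B : ℤ) (hAB : A ≤ B)
    (hout : ∀ k, k < A ∨ B ≤ k → h (k + 1) = h k) :
    ∑' k, (h (k + 1) - h k) = h B - h A := by
  rw [tsum_eq_sum (s := Finset.Ico A B)
    (by
      intro k hk
      simp only [Finset.mem_Ico, not_and_or, not_lt, not_le] at hk
      have : h (k + 1) = h k := by
        rcases hk with hk | hk
        · exact hout k (Or.inl hk)
        · exact hout k (Or.inr hk)
      rw [this, sub_self])]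
  exact sum_tele h A B hAB

lemma summable_single (i : ℤ) (v : ℝ) : Summable (fun k : ℤ => if k = i then v else 0) := by
  apply summable_of_finite_support
  apply (Set.finite_singleton i).subset
  intro k hk
  simp only [Function.mem_support] at hk
  by_contra hki
  simp only [Set.mem_singleton_iff] at hki
  rw [if_neg hki] at hk
  exact hk rfl

section Cum

variable (p : ℤ → ℝ)

/-- cumulative distribution: mass strictly below `i` -/
noncomputable def cum (i : ℤ) : ℝ := ∑' j, if j < i then p j else 0

variable {p}
variable (hp : ∀ i, 0 ≤ p i) (hfp : (Function.support p).Finite)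

include hfp in
lemma summable_p : Summable p := summable_of_finite_support hfp

include hfp in
lemma summable_ind (i : ℤ) : Summable fun j => if j < i then p j else 0 :=
  summable_of_finite_support <| hfp.subset <| by
    intro j hj
    simp only [Function.mem_support] at hj ⊢
    intro h0
    apply hj
    rw [h0]
    simp

include hp hfp

omit hfp in
lemma cum_nonneg (i : ℤ) : 0 ≤ cum p i :=
  tsum_nonneg fun j => by split_ifs; exacts [hp j, le_rfl]

lemma cum_mono {i i' : ℤ} (h : i ≤ i') : cum p i ≤ cum p i' := by
  refine Summable.tsum_le_tsum (fun j => ?_) (summable_ind hfp i) (summable_ind hfp i')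
  split_ifs with h1 h2 <;> first | exact le_rfl | exact hp j | omega

omit hp in
lemma cum_succ (i : ℤ) : cum p (i + 1) = cum p i + p i := by
  have e : (fun j => if j < i + 1 then p j else 0)
      = fun j => (if j < i then p j else 0) + (if j = i then p j else 0) := by
    funext j
    rcases lt_trichotomy j i with h | h | h
    · rw [if_pos h, if_pos (by omega), if_neg (by omega), add_zero]
    · rw [if_pos (by omega), if_neg (by omega), if_pos h, zero_add, h]
    · rw [if_neg (by omega), if_neg (by omega), if_neg (by omega), add_zero]
  have hs2 : Summable (fun j : ℤ => if j = i then p j else 0) := by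
    apply summable_of_finite_support
    apply (Set.finite_singleton i).subset
    intro j hj
    simp only [Function.mem_support] at hj
    by_contra hji
    simp only [Set.mem_singleton_iff] at hji
    rw [if_neg hji] at hj
    exact hj rfl
  have e2 : (fun j : ℤ => if j = i then p j else 0) = fun j : ℤ => if j = i then p i else 0 := by
    funext j
    by_cases hj : j = i
    · rw [if_pos hj, if_pos hj, hj]
    · rw [if_neg hj, if_neg hj]
  unfold cum
  rw [e, Summable.tsum_add (summable_ind hfp i) hs2]
  congr 1
  rw [e2, tsum_ite_eq]

omit hp hfp in
lemma cum_top {B : ℤ} (hB : ∀ j, p j ≠ 0 → j < B) : cum p B = ∑' j, p j := by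
  unfold cum
  refine tsum_congr fun j => ?_
  by_cases h0 : p j = 0
  · rw [h0]; simp
  · rw [if_pos (hB j h0)]

omit hp hfp in
lemma cum_bot {A : ℤ} (hA : ∀ j, p j ≠ 0 → A ≤ j) : cum p A = 0 := by
  unfold cum
  rw [show (fun j => if j < A then p j else 0) = fun _ => (0:ℝ) from ?_, tsum_zero]
  funext j
  by_cases h0 : p j = 0
  · rw [h0]; simp
  · rw [if_neg (by have := hA j h0; omega)]

lemma cum_le_sum (i : ℤ) : cum p i ≤ ∑' j, p j := by
  refine Summable.tsum_le_tsum (fun j => ?_) (summable_ind hfp i) (summable_p hfp)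
  split_ifs; exacts [le_rfl, hp j]

end Cum

/-- bounds around two finite supports -/
lemma exists_bounds {p q : ℤ → ℝ} (hfp : (Function.support p).Finite)
    (hfq : (Function.support q).Finite) :
    ∃ A B : ℤ, A ≤ B ∧ (∀ j, p j ≠ 0 → A ≤ j ∧ j < B) ∧ (∀ j, q j ≠ 0 → A ≤ j ∧ j < B) := by
  obtain ⟨a, ha⟩ := (hfp.union hfq).bddBelow
  obtain ⟨b, hb⟩ := (hfp.union hfq).bddAbove
  refine ⟨min a (b + 1), max (b + 1) a, le_max_of_le_right (min_le_left _ _), ?_, ?_⟩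
  · intro j hj
    have hm : j ∈ Function.support p ∪ Function.support q := Or.inl hj
    exact ⟨le_trans (min_le_left _ _) (ha hm), lt_of_le_of_lt (hb hm)
      (lt_of_lt_of_le (lt_add_one b) (le_max_left _ _))⟩
  · intro j hj
    have hm : j ∈ Function.support p ∪ Function.support q := Or.inr hj
    exact ⟨le_trans (min_le_left _ _) (ha hm), lt_of_le_of_lt (hb hm)
      (lt_of_lt_of_le (lt_add_one b) (le_max_left _ _))⟩

section Main

variable {p q : ℤ → ℝ}
variable (hp : ∀ i, 0 ≤ p i) (hq : ∀ i, 0 ≤ q i)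
variable (hfp : (Function.support p).Finite) (hfq : (Function.support q).Finite)
variable (hsp : ∑' i, p i = 1) (hsq : ∑' i, q i = 1)

include hp hq hfp hfq hsp hsq

/-- Case A of the lower bound: no heavy atom, a zero-diagonal coupling exists. -/
lemma lower_nodiag (hle : ∀ i, p i + q i ≤ 1) :
    ∃ K : ℤ → ℤ → ℝ, (∀ i k, 0 ≤ K i k) ∧ (∀ i, ∑' k, K i k = p i) ∧
      (∀ k, ∑' i, K i k = q k) ∧ ∀ i, K i i = 0 := by
  obtain ⟨A, B, hAB, hbp, hbq⟩ := exists_bounds hfp hfq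
  set P : ℤ → ℝ := cum p with hPdef
  set Q : ℤ → ℝ := cum q with hQdef
  have hPmono : ∀ {i i' : ℤ}, i ≤ i' → P i ≤ P i' := fun h => cum_mono hp hfp h
  have hQmono : ∀ {i i' : ℤ}, i ≤ i' → Q i ≤ Q i' := fun h => cum_mono hq hfq h
  have hP0 : ∀ i, 0 ≤ P i := cum_nonneg hp
  have hQ0 : ∀ i, 0 ≤ Q i := cum_nonneg hq
  have hP1 : ∀ i, P i ≤ 1 := fun i => by
    have := cum_le_sum hp hfp i; rwa [hsp] at this
  have hQ1 : ∀ i, Q i ≤ 1 := fun i => by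
    have := cum_le_sum hq hfq i; rwa [hsq] at this
  have hPsucc : ∀ i, P (i + 1) = P i + p i := cum_succ hfp
  have hQsucc : ∀ i, Q (i + 1) = Q i + q i := cum_succ hfq
  have hPA : P A = 0 := cum_bot fun j hj => (hbp j hj).1
  have hQA : Q A = 0 := cum_bot fun j hj => (hbq j hj).1
  have hPB : P B = 1 := by rw [hPdef, cum_top fun j hj => (hbp j hj).2, hsp]
  have hQB : Q B = 1 := by rw [hQdef, cum_top fun j hj => (hbq j hj).2, hsq]
  have cross : ∀ i j : ℤ, P (i + 1) - Q i ≤ P j - Q (j + 1) + 1 := by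
    intro i j
    rcases lt_trichotomy i j with h | h | h
    · have h1 : P (i + 1) ≤ P j := hPmono (by omega)
      have h2 : Q (j + 1) ≤ 1 := hQ1 _
      have h3 : 0 ≤ Q i := hQ0 _
      linarith
    · subst h
      have := hle i
      rw [hPsucc, hQsucc]; linarith
    · have h1 : Q (j + 1) ≤ Q i := hQmono (by omega)
      have h2 : P (i + 1) ≤ 1 := hP1 _
      have h3 : 0 ≤ P j := hP0 _
      linarith
  set θ : ℝ := sSup (Set.range fun i => P (i + 1) - Q i) with hθdef
  have hbdd : BddAbove (Set.range fun i : ℤ => P (i + 1) - Q i) := by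
    refine ⟨1, ?_⟩
    rintro x ⟨i, rfl⟩
    have := hP1 (i + 1); have := hQ0 i; dsimp only; linarith
  have hθ₁ : ∀ i, P (i + 1) - Q i ≤ θ := fun i => le_csSup hbdd ⟨i, rfl⟩
  have hθ₂ : ∀ j, θ ≤ P j - Q (j + 1) + 1 := fun j =>
    csSup_le (Set.range_nonempty _) (by rintro x ⟨i, rfl⟩; exact cross i j)
  have hpB : p B = 0 := by
    by_contra h; exact absurd (hbp B h).2 (lt_irrefl B)
  have hPB1 : P (B + 1) = 1 := by rw [hPsucc, hPB, hpB, add_zero]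
  have hθ0 : 0 ≤ θ := by
    have := hθ₁ B; rw [hPB1, hQB] at this; linarith
  have hθ1 : θ ≤ 1 := by
    refine csSup_le (Set.range_nonempty _) ?_
    rintro x ⟨i, rfl⟩
    have := hP1 (i + 1); have := hQ0 i; dsimp only; linarith
  refine ⟨fun i k => ov (P i) (P (i + 1)) (Q k + θ) (Q (k + 1) + θ)
      + ov (P i) (P (i + 1)) (Q k + θ - 1) (Q (k + 1) + θ - 1), ?_, ?_, ?_, ?_⟩
  · intro i k
    exact add_nonneg (ov_nonneg _ _ _ _) (ov_nonneg _ _ _ _)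
  · -- row sums
    intro i
    have hab : P i ≤ P (i + 1) := hPmono (by omega)
    set cl : ℝ → ℝ := fun x => max (P i) (min (P (i + 1)) x) with hcl
    set h : ℤ → ℝ := fun k => cl (Q k + θ) + cl (Q k + θ - 1) with hh
    have hK : ∀ k, ov (P i) (P (i + 1)) (Q k + θ) (Q (k + 1) + θ)
        + ov (P i) (P (i + 1)) (Q k + θ - 1) (Q (k + 1) + θ - 1) = h (k + 1) - h k := by
      intro k
      have hQk : Q k ≤ Q (k + 1) := hQmono (by omega)
      have h1 := ov_clamp (P i) (P (i + 1)) (Q k + θ) (Q (k + 1) + θ) hab (by linarith)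
      have h2 := ov_clamp (P i) (P (i + 1)) (Q k + θ - 1) (Q (k + 1) + θ - 1) hab (by linarith)
      rw [h1, h2]
      simp only [hh, hcl]
      ring
    calc ∑' k, (ov (P i) (P (i + 1)) (Q k + θ) (Q (k + 1) + θ)
        + ov (P i) (P (i + 1)) (Q k + θ - 1) (Q (k + 1) + θ - 1))
        = ∑' k, (h (k + 1) - h k) := tsum_congr hK
      _ = h B - h A := by
          refine tsum_tele h A B hAB ?_
          intro k hk
          have e : Q (k + 1) = Q k := by
            rcases hk with hk | hk
            · have e1 : Q (k + 1) ≤ 0 := hQA ▸ hQmono (by omega)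
              have e2 : 0 ≤ Q k := hQ0 k
              have e3 : Q k ≤ Q (k + 1) := hQmono (by omega)
              linarith
            · have e1 : 1 ≤ Q k := hQB ▸ hQmono hk
              have e2 : Q (k + 1) ≤ 1 := hQ1 _
              have e3 : Q k ≤ Q (k + 1) := hQmono (by omega)
              linarith
          simp only [hh, e]
      _ = p i := by
          simp only [hh, hQA, hQB]
          have e0 : (0:ℝ) + θ = θ := by ring
          have e1 : (1:ℝ) + θ - 1 = θ := by ring
          rw [e0, e1]
          have c1 : cl (1 + θ) = P (i + 1) := by
            simp only [hcl]
            rw [min_eq_left (by have := hP1 (i + 1); linarith), max_eq_right hab]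
          have c2 : cl (θ - 1) = P i := by
            simp only [hcl]
            rw [min_eq_right (by have := hP0 (i + 1); linarith),
              max_eq_left (by have := hP0 i; linarith)]
          rw [c1, c2, hPsucc i]
          ring
  · -- column sums
    intro k
    have hcd : Q k + θ ≤ Q (k + 1) + θ := by have := hQmono (show k ≤ k + 1 by omega); linarith
    set cl2 : ℝ → ℝ := fun x => max (Q k + θ) (min (Q (k + 1) + θ) x) with hcl2
    set h2f : ℤ → ℝ := fun i => cl2 (P i) + cl2 (P i + 1) with hh2
    have hK : ∀ i, ov (P i) (P (i + 1)) (Q k + θ) (Q (k + 1) + θ)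
        + ov (P i) (P (i + 1)) (Q k + θ - 1) (Q (k + 1) + θ - 1) = h2f (i + 1) - h2f i := by
      intro i
      have hab : P i ≤ P (i + 1) := hPmono (by omega)
      have e1 : ov (P i) (P (i + 1)) (Q k + θ) (Q (k + 1) + θ)
          = cl2 (P (i + 1)) - cl2 (P i) := by
        rw [ov_comm, ov_clamp _ _ _ _ hcd hab]
      have e2 : ov (P i) (P (i + 1)) (Q k + θ - 1) (Q (k + 1) + θ - 1)
          = cl2 (P (i + 1) + 1) - cl2 (P i + 1) := by
        rw [ov_shift, ov_comm, ov_clamp _ _ _ _ hcd (by linarith)]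
      rw [e1, e2]
      simp only [hh2]
      ring
    calc ∑' i, (ov (P i) (P (i + 1)) (Q k + θ) (Q (k + 1) + θ)
        + ov (P i) (P (i + 1)) (Q k + θ - 1) (Q (k + 1) + θ - 1))
        = ∑' i, (h2f (i + 1) - h2f i) := tsum_congr hK
      _ = h2f B - h2f A := by
          refine tsum_tele h2f A B hAB ?_
          intro i hi
          have e : P (i + 1) = P i := by
            rcases hi with hi | hi
            · have e1 : P (i + 1) ≤ 0 := hPA ▸ hPmono (by omega)
              have e2 : 0 ≤ P i := hP0 i
              have e3 : P i ≤ P (i + 1) := hPmono (by omega)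
              linarith
            · have e1 : 1 ≤ P i := hPB ▸ hPmono hi
              have e2 : P (i + 1) ≤ 1 := hP1 _
              have e3 : P i ≤ P (i + 1) := hPmono (by omega)
              linarith
          simp only [hh2, e]
      _ = q k := by
          simp only [hh2, hPA, hPB]
          have c1 : cl2 2 = Q (k + 1) + θ := by
            simp only [hcl2]
            rw [min_eq_left (by have := hQ1 (k + 1); linarith), max_eq_right hcd]
          have c2 : cl2 0 = Q k + θ := by
            simp only [hcl2]
            rw [min_eq_right (by have := hQ0 (k + 1); linarith),
              max_eq_left (by have := hQ0 k; linarith)]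
          have e12 : (1:ℝ) + 1 = 2 := by norm_num
          have e01 : (0:ℝ) + 1 = 1 := by norm_num
          rw [e12, e01, c1, c2, hQsucc k]
          ring
  · -- zero diagonal
    intro i
    have z1 : ov (P i) (P (i + 1)) (Q i + θ) (Q (i + 1) + θ) = 0 := by
      apply ov_eq_zero
      have h1 : P (i + 1) ≤ Q i + θ := by have := hθ₁ i; linarith
      exact le_trans (min_le_left _ _) (le_trans h1 (le_max_right _ _))
    have z2 : ov (P i) (P (i + 1)) (Q i + θ - 1) (Q (i + 1) + θ - 1) = 0 := by
      apply ov_eq_zero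
      have h1 : Q (i + 1) + θ - 1 ≤ P i := by have := hθ₂ i; linarith
      exact le_trans (min_le_right _ _) (le_trans h1 (le_max_left _ _))
    simp only [z1, z2, add_zero]

/-- the lower Fréchet bound is attained -/
lemma lower_exists :
    ∃ K : ℤ → ℤ → ℝ, (∀ i k, 0 ≤ K i k) ∧ (∀ i, ∑' k, K i k = p i) ∧
      (∀ k, ∑' i, K i k = q k) ∧ ∑' i, K i i = ∑' i, max (p i + q i - 1) 0 := by
  by_cases hex : ∃ i₀, 1 < p i₀ + q i₀
  · obtain ⟨i₀, hi₀⟩ := hex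
    have hone : ∀ i, i ≠ i₀ → p i + q i ≤ 1 := by
      intro i hi
      by_contra hcon
      push_neg at hcon
      have h1 : p i + p i₀ ≤ 1 := by
        rw [← hsp]
        calc p i + p i₀ = ∑ j ∈ ({i, i₀} : Finset ℤ), p j := (Finset.sum_pair hi).symm
          _ ≤ ∑' j, p j := Summable.sum_le_tsum _ (fun j _ => hp j) (summable_p hfp)
      have h2 : q i + q i₀ ≤ 1 := by
        rw [← hsq]
        calc q i + q i₀ = ∑ j ∈ ({i, i₀} : Finset ℤ), q j := (Finset.sum_pair hi).symm
          _ ≤ ∑' j, q j := Summable.sum_le_tsum _ (fun j _ => hq j) (summable_p hfq)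
      linarith
    set T : ℝ := p i₀ + q i₀ - 1 with hT
    refine ⟨fun i k => if i = i₀ then (if k = i₀ then T else q k)
      else (if k = i₀ then p i else 0), ?_, ?_, ?_, ?_⟩
    · intro i k
      dsimp only
      split_ifs
      · linarith
      · exact hq k
      · exact hp i
      · exact le_rfl
    · intro i
      dsimp only
      by_cases hi : i = i₀
      · simp only [if_pos hi]
        have e : (fun k => if k = i₀ then T else q k)
            = fun k => q k + (if k = i₀ then T - q i₀ else 0) := by
          funext k
          by_cases hk : k = i₀
          · rw [if_pos hk, if_pos hk, hk]; ring
          · rw [if_neg hk, if_neg hk, add_zero]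
        rw [e, Summable.tsum_add (summable_p hfq) (summable_single i₀ (T - q i₀)), hsq, tsum_ite_eq,
          hi, hT]
        ring
      · simp only [if_neg hi]
        exact tsum_ite_eq i₀ (fun _ => p i)
    · intro k
      dsimp only
      by_cases hk : k = i₀
      · simp only [if_pos hk]
        have e : (fun i : ℤ => if i = i₀ then T else p i)
            = fun i => p i + (if i = i₀ then T - p i₀ else 0) := by
          funext i
          by_cases hi : i = i₀
          · rw [if_pos hi, if_pos hi, hi]; ring
          · rw [if_neg hi, if_neg hi, add_zero]
        rw [e, Summable.tsum_add (summable_p hfp) (summable_single i₀ (T - p i₀)), hsp, tsum_ite_eq,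
          hk, hT]
        ring
      · simp only [if_neg hk]
        exact tsum_ite_eq i₀ (fun _ => q k)
    · refine tsum_congr fun i => ?_
      dsimp only
      by_cases hi : i = i₀
      · simp only [if_pos hi]
        rw [hi, hT]
        exact (max_eq_left (by linarith)).symm
      · simp only [if_neg hi]
        exact (max_eq_right (by have := hone i hi; linarith)).symm
  · push_neg at hex
    obtain ⟨K, h1, h2, h3, h4⟩ := lower_nodiag hp hq hfp hfq hsp hsq hex
    exact ⟨K, h1, h2, h3, tsum_congr fun i =>
      (h4 i).trans (max_eq_right (by have := hex i; linarith)).symm⟩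

/-- the upper Fréchet bound is attained -/
lemma upper_exists :
    ∃ K : ℤ → ℤ → ℝ, (∀ i k, 0 ≤ K i k) ∧ (∀ i, ∑' k, K i k = p i) ∧
      (∀ k, ∑' i, K i k = q k) ∧ ∑' i, K i i = ∑' i, min (p i) (q i) := by
  set m : ℤ → ℝ := fun i => min (p i) (q i) with hm
  set r : ℤ → ℝ := fun i => p i - m i with hr
  set s : ℤ → ℝ := fun i => q i - m i with hs
  have hr0 : ∀ i, 0 ≤ r i := fun i => by
    simp only [hr, hm]; have := min_le_left (p i) (q i); linarith
  have hs0 : ∀ i, 0 ≤ s i := fun i => by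
    simp only [hs, hm]; have := min_le_right (p i) (q i); linarith
  have hsm : Summable m := by
    apply summable_of_finite_support
    apply hfp.subset
    intro i hi
    simp only [Function.mem_support] at hi ⊢
    intro h0
    apply hi
    simp only [hm, h0]
    exact min_eq_left (hq i)
  have hsr : Summable r := (summable_p hfp).sub hsm
  have hss : Summable s := (summable_p hfq).sub hsm
  set c : ℝ := 1 - ∑' i, m i with hc
  have hrc : ∑' i, r i = c := by
    simp only [hr]
    rw [Summable.tsum_sub (summable_p hfp) hsm, hsp, hc]
  have hsc : ∑' i, s i = c := by
    simp only [hs]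
    rw [Summable.tsum_sub (summable_p hfq) hsm, hsq, hc]
  have hdivr : ∀ i, r i / c * c = r i := by
    intro i
    by_cases h0 : c = 0
    · rw [h0, mul_zero]
      have hle : r i ≤ 0 := by
        have := Summable.le_tsum hsr i fun j _ => hr0 j
        rw [hrc, h0] at this
        exact this
      have := hr0 i
      linarith
    · exact div_mul_cancel₀ _ h0
  have hdivs : ∀ k, s k / c * c = s k := by
    intro k
    by_cases h0 : c = 0
    · rw [h0, mul_zero]
      have hle : s k ≤ 0 := by
        have := Summable.le_tsum hss k fun j _ => hs0 j
        rw [hsc, h0] at this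
        exact this
      have := hs0 k
      linarith
    · exact div_mul_cancel₀ _ h0
  have hc0 : 0 ≤ c := by
    have hle : ∑' i, m i ≤ ∑' i, p i :=
      Summable.tsum_le_tsum (fun i => min_le_left _ _) hsm (summable_p hfp)
    rw [hsp] at hle
    rw [hc]; linarith
  refine ⟨fun i k => (if k = i then m i else 0) + r i / c * s k, ?_, ?_, ?_, ?_⟩
  · intro i k
    dsimp only
    apply add_nonneg
    · split_ifs
      · exact le_min (hp i) (hq i)
      · exact le_rfl
    · exact mul_nonneg (div_nonneg (hr0 i) hc0) (hs0 k)
  · intro i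
    have e : (fun k => (if k = i then m i else 0) + r i / c * s k)
        = fun k => (if k = i then m i else 0) + (r i / c) * s k := rfl
    rw [e, Summable.tsum_add (summable_single i (m i)) (hss.mul_left (r i / c)), tsum_ite_eq,
      tsum_mul_left, hsc, hdivr]
    simp only [hm, hr]
    ring
  · intro k
    have e : (fun i => (if k = i then m i else 0) + r i / c * s k)
        = fun i => (if i = k then m k else 0) + (s k / c) * r i := by
      funext i
      congr 1
      · by_cases hi : i = k
        · simp [hi]
        · rw [if_neg (Ne.symm hi), if_neg hi]
      · ring
    rw [e, Summable.tsum_add (summable_single k (m k)) (hsr.mul_left (s k / c)), tsum_ite_eq,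
      tsum_mul_left, hrc, hdivs]
    simp only [hm, hs]
    ring
  · refine tsum_congr fun i => ?_
    dsimp only
    rw [if_pos rfl]
    have hrs : r i * s i = 0 := by
      rcases le_total (p i) (q i) with h | h
      · have : r i = 0 := by simp only [hr, hm]; rw [min_eq_left h]; ring
        rw [this, zero_mul]
      · have : s i = 0 := by simp only [hs, hm]; rw [min_eq_right h]; ring
        rw [this, mul_zero]
    have : r i / c * s i = 0 := by
      rw [div_mul_eq_mul_div, hrs, zero_div]
    rw [this, add_zero]

end Main

end Stmt14Aux

/-- Sharpness of the Fréchet pmf bounds for finitely supported marginals: there exist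
couplings `J` (with `J i j = P(Y₁ = i, Y₀ = j)`) of the marginals `f₁` (for `Y₁`) and `f₀`
(for `Y₀`) attaining `P(Y₁ - Y₀ = δ) = Σᵢ max{f₁ i + f₀ (i-δ) - 1, 0}` and
`P(Y₁ - Y₀ = δ) = Σᵢ min{f₁ i, f₀ (i-δ)}` respectively. -/
theorem stmt_14 (f₀ f₁ : ℤ → ℝ)
    (h₀ : ∀ j, 0 ≤ f₀ j) (h₁ : ∀ i, 0 ≤ f₁ i)
    (hfin₀ : (Function.support f₀).Finite) (hfin₁ : (Function.support f₁).Finite)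
    (hs₀ : ∑' j, f₀ j = 1) (hs₁ : ∑' i, f₁ i = 1) (δ : ℤ) :
    (∃ J : ℤ → ℤ → ℝ, (∀ i j, 0 ≤ J i j) ∧
      (∀ i, ∑' j, J i j = f₁ i) ∧ (∀ j, ∑' i, J i j = f₀ j) ∧
      (∑' i, J i (i - δ)) = ∑' i, max (f₁ i + f₀ (i - δ) - 1) 0) ∧
    (∃ J : ℤ → ℤ → ℝ, (∀ i j, 0 ≤ J i j) ∧
      (∀ i, ∑' j, J i j = f₁ i) ∧ (∀ j, ∑' i, J i j = f₀ j) ∧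
      (∑' i, J i (i - δ)) = ∑' i, min (f₁ i) (f₀ (i - δ))) := by
  set q : ℤ → ℝ := fun i => f₀ (i - δ) with hqdef
  have hq : ∀ i, 0 ≤ q i := fun i => h₀ (i - δ)
  have hfq : (Function.support q).Finite := by
    have : Function.support q = (fun i => i - δ) ⁻¹' Function.support f₀ := rfl
    rw [this]
    exact hfin₀.preimage ((sub_left_injective (G := ℤ) (b := δ)).injOn)
  have hsq : ∑' i, q i = 1 := by
    have := (Equiv.subRight δ).tsum_eq f₀
    simpa [hqdef] using this.trans hs₀
  have convert_K : ∀ (K : ℤ → ℤ → ℝ) (g : ℤ → ℝ),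
      ((∀ i k, 0 ≤ K i k) ∧ (∀ i, ∑' k, K i k = f₁ i) ∧
        (∀ k, ∑' i, K i k = q k) ∧ ∑' i, K i i = ∑' i, g i) →
      ∃ J : ℤ → ℤ → ℝ, (∀ i j, 0 ≤ J i j) ∧ (∀ i, ∑' j, J i j = f₁ i) ∧
        (∀ j, ∑' i, J i j = f₀ j) ∧ (∑' i, J i (i - δ)) = ∑' i, g i := by
    rintro K g ⟨k1, k2, k3, k4⟩
    refine ⟨fun i j => K i (j + δ), fun i j => k1 i (j + δ), ?_, ?_, ?_⟩
    · intro i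
      have := (Equiv.addRight δ).tsum_eq (K i)
      simpa using this.trans (k2 i)
    · intro j
      have := k3 (j + δ)
      simpa [hqdef] using this
    · rw [← k4]
      refine tsum_congr fun i => ?_
      have e : i - δ + δ = i := by omega
      dsimp only
      rw [e]
  obtain ⟨Kl, hKl⟩ := Stmt14Aux.lower_exists h₁ hq hfin₁ hfq hs₁ hsq
  obtain ⟨Ku, hKu⟩ := Stmt14Aux.upper_exists h₁ hq hfin₁ hfq hs₁ hsq
  exact ⟨convert_K Kl _ hKl, convert_K Ku _ hKu⟩
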